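/- Let H be a complex Hilbert space, let k ≥ 2, and let X, Y be compatible k-dimensional subspaces of H with dim(X ∩ Y) = k − 2. Then for every k-dimensional subspace Z of H that is ortho-adjacent to both X and Y, there are precisely two k-dimensional subspaces of H that are ortho-adjacent to each of X, Y and Z. -/

import Mathlib

noncomputable section

open scoped Classical

variable {H : Type*} [NormedAddCommGroup H] [InnerProductSpace ℂ H] [CompleteSpace H]

/-- The orthogonal projection onto `X`, as an operator `H → H` (junk value `0` if the
orthogonal projection onto `X` does not exist; it always exists for finite-dimensional,
and more generally complete, subspaces). -/
noncomputable def projOn (X : Submodule ℂ H) : H →L[ℂ] H :=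
  if h : Submodule.HasOrthogonalProjection X then
    haveI := h
    X.subtypeL.comp (Submodule.orthogonalProjectionOnto X)
  else 0

/-- Two subspaces of `H` are compatible if their orthogonal projections commute. -/
def Compatible (X Y : Submodule ℂ H) : Prop :=
  projOn X * projOn Y = projOn Y * projOn X

/-- `X` is a `k`-dimensional subspace of `H`. -/
def IsDim (k : ℕ) (X : Submodule ℂ H) : Prop :=
  FiniteDimensional ℂ X ∧ Module.finrank ℂ X = k

/-- Two (distinct) `k`-dimensional subspaces are adjacent if their intersection is
`(k-1)`-dimensional. -/
def AdjacentSub (k : ℕ) (X Y : Submodule ℂ H) : Prop :=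
  X ≠ Y ∧ Module.finrank ℂ ↥(X ⊓ Y) = k - 1

/-- Ortho-adjacency: adjacent and compatible. -/
def OrthoAdjacent (k : ℕ) (X Y : Submodule ℂ H) : Prop :=
  AdjacentSub k X Y ∧ Compatible X Y

/-- The ortho-Grassmann graph `Γ⊥_k(H)` on the `k`-dimensional subspaces of `H`:
two `k`-dimensional subspaces are connected by an edge if they are ortho-adjacent. -/
def orthoGrassmannGraph (H : Type*) [NormedAddCommGroup H] [InnerProductSpace ℂ H]
    [CompleteSpace H] (k : ℕ) : SimpleGraph {X : Submodule ℂ H // IsDim k X} where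
  Adj X Y := OrthoAdjacent k X.1 Y.1
  symm := ⟨by
    rintro X Y ⟨⟨hne, hdim⟩, hc⟩
    refine ⟨⟨hne.symm, by rwa [inf_comm]⟩, ?_⟩
    unfold Compatible at hc ⊢
    exact hc.symm⟩
  loopless := ⟨fun X h => h.1.1 rfl⟩

/-- The Grassmann graph `Γ_k(H)` on the `k`-dimensional subspaces of `H`:
two `k`-dimensional subspaces are connected by an edge if they are adjacent. -/
def grassmannGraph (H : Type*) [NormedAddCommGroup H] [InnerProductSpace ℂ H]
    [CompleteSpace H] (k : ℕ) : SimpleGraph {X : Submodule ℂ H // IsDim k X} where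
  Adj X Y := AdjacentSub k X.1 Y.1
  symm := ⟨by
    rintro X Y ⟨hne, hdim⟩
    exact ⟨hne.symm, by rwa [inf_comm]⟩⟩
  loopless := ⟨fun X h => h.1 rfl⟩

open scoped InnerProductSpace

lemma projOn_apply (K : Submodule ℂ H) [Submodule.HasOrthogonalProjection K] (x : H) :
    projOn K x = (Submodule.orthogonalProjectionOnto K x : H) := by
  simp [projOn, dif_pos ‹Submodule.HasOrthogonalProjection K›]

lemma projOn_mem (K : Submodule ℂ H) [Submodule.HasOrthogonalProjection K] (x : H) : projOn K x ∈ K := by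
  rw [projOn_apply]; exact (Submodule.orthogonalProjectionOnto K x).2

lemma sub_projOn_mem (K : Submodule ℂ H) [Submodule.HasOrthogonalProjection K] (x : H) :
    x - projOn K x ∈ Kᗮ := by
  rw [projOn_apply]; exact K.sub_starProjection_mem_orthogonal x

lemma projOn_eq_self (K : Submodule ℂ H) [Submodule.HasOrthogonalProjection K] {x : H} (hx : x ∈ K) :
    projOn K x = x := by
  rw [projOn_apply]; exact (K.starProjection_eq_self_iff).2 hx

lemma projOn_eq_zero (K : Submodule ℂ H) [Submodule.HasOrthogonalProjection K] {x : H} (hx : x ∈ Kᗮ) :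
    projOn K x = 0 := by
  rw [projOn_apply, Submodule.orthogonalProjectionOnto_apply_of_mem_orthogonal hx,
    Submodule.coe_zero]

lemma projOn_unique (K : Submodule ℂ H) [Submodule.HasOrthogonalProjection K] (f : H →L[ℂ] H)
    (hmem : ∀ x, f x ∈ K) (horth : ∀ x, x - f x ∈ Kᗮ) : projOn K = f := by
  ext x
  rw [projOn_apply]
  exact Submodule.eq_starProjection_of_mem_orthogonal (hmem x) (horth x)

omit [CompleteSpace H] in
lemma inner_zero_of_mem_of_mem_orthogonal {U : Submodule ℂ H} {u v : H} (hu : u ∈ U)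
    (hv : v ∈ Uᗮ) : ⟪u, v⟫_ℂ = 0 :=
  (Submodule.mem_orthogonal _ _).1 hv u hu

omit [CompleteSpace H] in
lemma inner_zero_of_mem_orthogonal_of_mem {U : Submodule ℂ H} {u v : H} (hu : u ∈ Uᗮ)
    (hv : v ∈ U) : ⟪u, v⟫_ℂ = 0 :=
  (Submodule.mem_orthogonal' _ _).1 hu v hv

lemma projOn_sup {U V : Submodule ℂ H} (h : U ⟂ V) [Submodule.HasOrthogonalProjection U]
    [Submodule.HasOrthogonalProjection V] [Submodule.HasOrthogonalProjection (U ⊔ V)] :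
    projOn (U ⊔ V) = projOn U + projOn V := by
  apply projOn_unique
  · intro x
    exact Submodule.add_mem_sup (projOn_mem U x) (projOn_mem V x)
  · intro x
    simp only [ContinuousLinearMap.add_apply]
    rw [Submodule.isOrtho_iff_le] at h
    intro w hw
    rw [Submodule.mem_sup] at hw
    obtain ⟨u, hu, v, hv, rfl⟩ := hw
    have h1 : ⟪u, x - ((projOn U) x + (projOn V) x)⟫_ℂ = 0 := by
      have e1 := inner_zero_of_mem_of_mem_orthogonal hu (sub_projOn_mem U x)
      have e2 : ⟪u, projOn V x⟫_ℂ = 0 :=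
        inner_zero_of_mem_orthogonal_of_mem (h hu) (projOn_mem V x)
      rw [show x - ((projOn U) x + (projOn V) x) = (x - projOn U x) - projOn V x by abel,
        inner_sub_right, e1, e2, sub_zero]
    have h2 : ⟪v, x - ((projOn U) x + (projOn V) x)⟫_ℂ = 0 := by
      have e1 := inner_zero_of_mem_of_mem_orthogonal hv (sub_projOn_mem V x)
      have e2 : ⟪v, projOn U x⟫_ℂ = 0 :=
        inner_zero_of_mem_of_mem_orthogonal hv (h (projOn_mem U x))
      rw [show x - ((projOn U) x + (projOn V) x) = (x - projOn V x) - projOn U x by abel,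
        inner_sub_right, e1, e2, sub_zero]
    rw [inner_add_left, h1, h2, add_zero]

lemma projOn_comp_of_le {U V : Submodule ℂ H} (h : U ≤ V) [Submodule.HasOrthogonalProjection U]
    [Submodule.HasOrthogonalProjection V] : projOn V * projOn U = projOn U := by
  ext x
  exact projOn_eq_self V (h (projOn_mem U x))

lemma projOn_comp_of_le' {U V : Submodule ℂ H} (h : U ≤ V) [Submodule.HasOrthogonalProjection U]
    [Submodule.HasOrthogonalProjection V] : projOn U * projOn V = projOn U := by
  ext x
  have : x - projOn V x ∈ Uᗮ := Submodule.orthogonal_le h (sub_projOn_mem V x)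
  have e : projOn U (x - projOn V x) = 0 := projOn_eq_zero U this
  have h2 := map_sub (projOn U) x (projOn V x)
  rw [e, eq_comm, sub_eq_zero] at h2
  exact h2.symm

lemma projOn_comp_of_isOrtho {U V : Submodule ℂ H} (h : U ⟂ V) [Submodule.HasOrthogonalProjection U]
    [Submodule.HasOrthogonalProjection V] : projOn U * projOn V = 0 := by
  ext x
  have : projOn V x ∈ Uᗮ := Submodule.isOrtho_iff_le.1 h.symm (projOn_mem V x)
  exact projOn_eq_zero U this

lemma compat_le {U V : Submodule ℂ H} (h : Compatible U V) [Submodule.HasOrthogonalProjection U]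
    [Submodule.HasOrthogonalProjection V] : U ≤ (U ⊓ V) ⊔ (U ⊓ Vᗮ) := by
  intro x hx
  have hy : projOn V x ∈ U := by
    have : projOn V x = (projOn U * projOn V) x := by
      unfold Compatible at h
      rw [h]
      simp only [ContinuousLinearMap.mul_apply]
      rw [projOn_eq_self U hx]
    rw [this]
    exact projOn_mem U _
  refine Submodule.mem_sup.2 ⟨projOn V x, ⟨hy, projOn_mem V x⟩,
    x - projOn V x, ⟨U.sub_mem hx hy, sub_projOn_mem V x⟩, by abel⟩

omit [CompleteSpace H] in
lemma inf_orth_sup {W S : Submodule ℂ H} (h : W ⟂ S) : Wᗮ ⊓ (W ⊔ S) = S := by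
  apply le_antisymm
  · rintro x ⟨hx1, hx2⟩
    obtain ⟨w, hw, s, hs, rfl⟩ := Submodule.mem_sup.1 hx2
    have hsW : s ∈ Wᗮ := Submodule.isOrtho_iff_le.1 h.symm hs
    have hwW : w ∈ Wᗮ := by simpa using Wᗮ.sub_mem hx1 hsW
    have : w = 0 := by
      have := inner_zero_of_mem_of_mem_orthogonal hw hwW
      simpa [inner_self_eq_zero] using this
    simpa [this] using hs
  · exact le_inf (Submodule.isOrtho_iff_le.1 h.symm) le_sup_right

omit [CompleteSpace H] in
lemma sup_inf_eq_left {S T U : Submodule ℂ H} (hS : S ≤ U) (hT : Disjoint T U) :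
    (S ⊔ T) ⊓ U = S := by
  apply le_antisymm
  · rintro x ⟨hx1, hx2⟩
    obtain ⟨s, hs, t, ht, rfl⟩ := Submodule.mem_sup.1 hx1
    have htU : t ∈ U := by simpa using U.sub_mem hx2 (hS hs)
    have : t = 0 := by
      have := hT.le_bot ⟨ht, htU⟩
      simpa using this
    simpa [this] using hs
  · exact le_inf le_sup_left hS

omit [CompleteSpace H] in
lemma triple_indep {W A B : Submodule ℂ H} (hWA : W ⟂ A) (hWB : W ⟂ B) (hAB : A ⟂ B)
    {w a b : H} (hw : w ∈ W) (ha : a ∈ A) (hb : b ∈ B) (h : w + a + b = 0) :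
    w = 0 ∧ a = 0 ∧ b = 0 := by
  have iWA := inner_zero_of_mem_orthogonal_of_mem (Submodule.isOrtho_iff_le.1 hWA hw) ha
  have iWB := inner_zero_of_mem_orthogonal_of_mem (Submodule.isOrtho_iff_le.1 hWB hw) hb
  have iAB := inner_zero_of_mem_orthogonal_of_mem (Submodule.isOrtho_iff_le.1 hAB ha) hb
  have iAW := inner_zero_of_mem_orthogonal_of_mem (Submodule.isOrtho_iff_le.1 hWA.symm ha) hw
  have iBW := inner_zero_of_mem_orthogonal_of_mem (Submodule.isOrtho_iff_le.1 hWB.symm hb) hw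
  have iBA := inner_zero_of_mem_orthogonal_of_mem (Submodule.isOrtho_iff_le.1 hAB.symm hb) ha
  have hw0 : w = 0 := by
    have : ⟪w, w + a + b⟫_ℂ = 0 := by rw [h, inner_zero_right]
    rw [inner_add_right, inner_add_right, iWA, iWB, add_zero, add_zero,
      inner_self_eq_zero] at this
    exact this
  have ha0 : a = 0 := by
    have : ⟪a, w + a + b⟫_ℂ = 0 := by rw [h, inner_zero_right]
    rw [inner_add_right, inner_add_right, iAW, iAB, zero_add, add_zero,
      inner_self_eq_zero] at this
    exact this
  have hb0 : b = 0 := by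
    have : ⟪b, w + a + b⟫_ℂ = 0 := by rw [h, inner_zero_right]
    rw [inner_add_right, inner_add_right, iBW, iBA, zero_add, zero_add,
      inner_self_eq_zero] at this
    exact this
  exact ⟨hw0, ha0, hb0⟩

lemma finrank_sup_of_isOrtho {U V : Submodule ℂ H} (h : U ⟂ V) [FiniteDimensional ℂ U]
    [FiniteDimensional ℂ V] :
    Module.finrank ℂ ↥(U ⊔ V) = Module.finrank ℂ U + Module.finrank ℂ V := by
  have := Submodule.finrank_sup_add_finrank_inf_eq U V
  rw [disjoint_iff.1 h.disjoint] at this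
  simpa using this

omit [CompleteSpace H] in
lemma ne_of_ortho_witness {P Q : Submodule ℂ H} {b : H} (hbP : b ∈ P) (hb0 : b ≠ 0)
    (hbQ : b ∈ Qᗮ) : P ≠ Q := by
  rintro rfl
  exact hb0 (by simpa [inner_self_eq_zero] using inner_zero_of_mem_of_mem_orthogonal hbP hbQ)

lemma structure_lemma (k : ℕ) (hk : 2 ≤ k) (X Y : Submodule ℂ H) (hX : IsDim k X)
    (hY : IsDim k Y) (hint : Module.finrank ℂ ↥(X ⊓ Y) = k - 2)
    (Z' : Submodule ℂ H) (hZ' : IsDim k Z')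
    (hZX : OrthoAdjacent k Z' X) (hZY : OrthoAdjacent k Z' Y) :
    X ⊓ Y ≤ Z' ∧
    Module.finrank ℂ ↥((X ⊓ Y)ᗮ ⊓ (Z' ⊓ X)) = 1 ∧
    Module.finrank ℂ ↥((X ⊓ Y)ᗮ ⊓ (Z' ⊓ Y)) = 1 ∧
    Z' ⊓ X = (X ⊓ Y) ⊔ ((X ⊓ Y)ᗮ ⊓ (Z' ⊓ X)) ∧
    Z' ⊓ Y = (X ⊓ Y) ⊔ ((X ⊓ Y)ᗮ ⊓ (Z' ⊓ Y)) ∧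
    Z' = (Z' ⊓ X) ⊔ (Z' ⊓ Y) := by
  haveI := hX.1; haveI := hY.1; haveI := hZ'.1
  set W := X ⊓ Y with hW
  haveI : FiniteDimensional ℂ W := Submodule.finiteDimensional_of_le (inf_le_left : W ≤ X)
  haveI : FiniteDimensional ℂ (Z' ⊓ X : Submodule ℂ H) :=
    Submodule.finiteDimensional_of_le inf_le_left
  haveI : FiniteDimensional ℂ (Z' ⊓ Y : Submodule ℂ H) :=
    Submodule.finiteDimensional_of_le inf_le_left
  haveI : FiniteDimensional ℂ (Z' ⊓ W : Submodule ℂ H) :=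
    Submodule.finiteDimensional_of_le inf_le_left
  have dZX : Module.finrank ℂ ↥(Z' ⊓ X) = k - 1 := hZX.1.2
  have dZY : Module.finrank ℂ ↥(Z' ⊓ Y) = k - 1 := hZY.1.2
  have hinf : (Z' ⊓ X) ⊓ (Z' ⊓ Y) = Z' ⊓ W := (inf_inf_distrib_left Z' X Y).symm
  have h1 := Submodule.finrank_sup_add_finrank_inf_eq (Z' ⊓ X) (Z' ⊓ Y)
  rw [hinf, dZX, dZY] at h1
  have hsup_le : Module.finrank ℂ ↥((Z' ⊓ X) ⊔ (Z' ⊓ Y)) ≤ k := by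
    rw [← hZ'.2]
    exact Submodule.finrank_mono (sup_le inf_le_left inf_le_left)
  have hZW_le : Module.finrank ℂ ↥(Z' ⊓ W) ≤ k - 2 := by
    rw [← hint]
    exact Submodule.finrank_mono inf_le_right
  have hZW : Module.finrank ℂ ↥(Z' ⊓ W) = k - 2 := by omega
  have hWZ' : W ≤ Z' := by
    have : Z' ⊓ W = W := Submodule.eq_of_le_of_finrank_le inf_le_right (by omega)
    rw [← this]; exact inf_le_left
  have hsup : (Z' ⊓ X) ⊔ (Z' ⊓ Y) = Z' := by
    refine Submodule.eq_of_le_of_finrank_le (sup_le inf_le_left inf_le_left) ?_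
    rw [hZ'.2]; omega
  have hWZX : W ≤ Z' ⊓ X := le_inf hWZ' inf_le_left
  have hWZY : W ≤ Z' ⊓ Y := le_inf hWZ' inf_le_right
  have hdecX : (Z' ⊓ X) = W ⊔ (Wᗮ ⊓ (Z' ⊓ X)) :=
    (Submodule.sup_orthogonal_inf_of_hasOrthogonalProjection hWZX).symm
  have hdecY : (Z' ⊓ Y) = W ⊔ (Wᗮ ⊓ (Z' ⊓ Y)) :=
    (Submodule.sup_orthogonal_inf_of_hasOrthogonalProjection hWZY).symm
  haveI : FiniteDimensional ℂ (Wᗮ ⊓ (Z' ⊓ X) : Submodule ℂ H) :=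
    Submodule.finiteDimensional_of_le inf_le_right
  haveI : FiniteDimensional ℂ (Wᗮ ⊓ (Z' ⊓ Y) : Submodule ℂ H) :=
    Submodule.finiteDimensional_of_le inf_le_right
  have hoX : W ⟂ (Wᗮ ⊓ (Z' ⊓ X)) := (Submodule.isOrtho_iff_le.2 inf_le_left).symm
  have hoY : W ⟂ (Wᗮ ⊓ (Z' ⊓ Y)) := (Submodule.isOrtho_iff_le.2 inf_le_left).symm
  have dX : Module.finrank ℂ ↥(Wᗮ ⊓ (Z' ⊓ X)) = 1 := by
    have := finrank_sup_of_isOrtho hoX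
    rw [← hdecX, dZX, hint] at this
    omega
  have dY : Module.finrank ℂ ↥(Wᗮ ⊓ (Z' ⊓ Y)) = 1 := by
    have := finrank_sup_of_isOrtho hoY
    rw [← hdecY, dZY, hint] at this
    omega
  exact ⟨hWZ', dX, dY, hdecX, hdecY, hsup.symm⟩

lemma commute_projOn_of_le {U V : Submodule ℂ H} (h : U ≤ V) [Submodule.HasOrthogonalProjection U]
    [Submodule.HasOrthogonalProjection V] : Commute (projOn U) (projOn V) := by
  show _ = _
  rw [projOn_comp_of_le' h, projOn_comp_of_le h]

lemma commute_projOn_of_isOrtho {U V : Submodule ℂ H} (h : U ⟂ V) [Submodule.HasOrthogonalProjection U]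
    [Submodule.HasOrthogonalProjection V] : Commute (projOn U) (projOn V) := by
  show _ = _
  rw [projOn_comp_of_isOrtho h, projOn_comp_of_isOrtho h.symm]

lemma ne_bot_of_finrank_one {U : Submodule ℂ H} (h : Module.finrank ℂ U = 1) : U ≠ ⊥ := by
  intro hb
  rw [hb, finrank_bot] at h
  exact one_ne_zero h.symm

/-- Let `X, Y` be compatible `k`-dimensional subspaces of `H` with `dim (X ∩ Y) = k - 2`.
Then for every `k`-dimensional subspace `Z` ortho-adjacent to both `X, Y` there are precisely
two `k`-dimensional subspaces of `H` ortho-adjacent to each of `X, Y, Z`. -/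
theorem ncard_orthoAdjacent_to_triple_eq_two
    (k : ℕ) (hk : 2 ≤ k) (X Y : Submodule ℂ H) (hX : IsDim k X) (hY : IsDim k Y)
    (hcomp : Compatible X Y) (hint : Module.finrank ℂ ↥(X ⊓ Y) = k - 2)
    (Z : Submodule ℂ H) (hZ : IsDim k Z)
    (hZX : OrthoAdjacent k Z X) (hZY : OrthoAdjacent k Z Y) :
    {Z' : Submodule ℂ H | IsDim k Z' ∧ OrthoAdjacent k Z' X ∧ OrthoAdjacent k Z' Y ∧
      OrthoAdjacent k Z' Z}.ncard = 2 := by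
  haveI := hX.1; haveI := hY.1; haveI := hZ.1
  set W := X ⊓ Y with hW
  set A := X ⊓ Yᗮ with hA
  set B := Y ⊓ Xᗮ with hB
  haveI : FiniteDimensional ℂ W := Submodule.finiteDimensional_of_le (inf_le_left : W ≤ X)
  haveI : FiniteDimensional ℂ A := Submodule.finiteDimensional_of_le (inf_le_left : A ≤ X)
  haveI : FiniteDimensional ℂ B := Submodule.finiteDimensional_of_le (inf_le_left : B ≤ Y)
  have hcomp' : Compatible Y X := Eq.symm hcomp
  have hXdec : X = W ⊔ A := le_antisymm (compat_le hcomp) (sup_le inf_le_left inf_le_left)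
  have hYdec : Y = W ⊔ B := by
    refine le_antisymm ?_ (sup_le inf_le_right inf_le_left)
    have := compat_le hcomp'
    rwa [inf_comm Y X, ← hW, ← hB] at this
  -- orthogonality of the basic pieces
  have hAW : A ⟂ W := Submodule.isOrtho_iff_le.2
    (le_trans inf_le_right (Submodule.orthogonal_le inf_le_right))
  have hWA := hAW.symm
  have hBW : B ⟂ W := Submodule.isOrtho_iff_le.2
    (le_trans inf_le_right (Submodule.orthogonal_le inf_le_left))
  have hWB := hBW.symm
  have hBA : B ⟂ A := Submodule.isOrtho_iff_le.2
    (le_trans inf_le_right (Submodule.orthogonal_le inf_le_left))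
  have hAB := hBA.symm
  -- dimensions
  have dA : Module.finrank ℂ A = 2 := by
    have h1 := finrank_sup_of_isOrtho hWA
    rw [← hXdec, hX.2, hint] at h1
    omega
  have dB : Module.finrank ℂ B = 2 := by
    have h1 := finrank_sup_of_isOrtho hWB
    rw [← hYdec, hY.2, hint] at h1
    omega
  have hWcX : Wᗮ ⊓ X = A := by conv_lhs => rw [hXdec, inf_orth_sup hWA]
  have hWcY : Wᗮ ⊓ Y = B := by conv_lhs => rw [hYdec, inf_orth_sup hWB]
  -- structure of Z
  obtain ⟨hWZ, dLa, dLb, hZXdec, hZYdec, hZsup⟩ :=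
    structure_lemma k hk X Y hX hY hint Z hZ hZX hZY
  set La := Wᗮ ⊓ (Z ⊓ X) with hLa
  set Lb := Wᗮ ⊓ (Z ⊓ Y) with hLb
  haveI : FiniteDimensional ℂ La :=
    Submodule.finiteDimensional_of_le (le_trans inf_le_right inf_le_right)
  haveI : FiniteDimensional ℂ Lb :=
    Submodule.finiteDimensional_of_le (le_trans inf_le_right inf_le_right)
  have hLaA : La ≤ A := by
    rw [← hWcX]; exact inf_le_inf_left _ inf_le_right
  have hLbB : Lb ≤ B := by
    rw [← hWcY]; exact inf_le_inf_left _ inf_le_right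
  have hLaZ : La ≤ Z := le_trans inf_le_right inf_le_left
  have hLbZ : Lb ≤ Z := le_trans inf_le_right inf_le_left
  have hZdec : Z = (W ⊔ La) ⊔ Lb := by
    rw [hZsup, hZXdec, hZYdec, sup_sup_sup_comm, sup_idem, sup_assoc]
  set La' := Laᗮ ⊓ A with hLa'
  set Lb' := Lbᗮ ⊓ B with hLb'
  haveI : FiniteDimensional ℂ La' := Submodule.finiteDimensional_of_le inf_le_right
  haveI : FiniteDimensional ℂ Lb' := Submodule.finiteDimensional_of_le inf_le_right
  have hLa'A : La' ≤ A := inf_le_right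
  have hLb'B : Lb' ≤ B := inf_le_right
  have hAdec : A = La ⊔ La' := (Submodule.sup_orthogonal_inf_of_hasOrthogonalProjection hLaA).symm
  have hBdec : B = Lb ⊔ Lb' := (Submodule.sup_orthogonal_inf_of_hasOrthogonalProjection hLbB).symm
  have hLaLa' : La ⟂ La' := (Submodule.isOrtho_iff_le.2 (inf_le_left : La' ≤ Laᗮ)).symm
  have hLbLb' : Lb ⟂ Lb' := (Submodule.isOrtho_iff_le.2 (inf_le_left : Lb' ≤ Lbᗮ)).symm
  have dLa' : Module.finrank ℂ La' = 1 := by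
    have h1 := finrank_sup_of_isOrtho hLaLa'
    rw [← hAdec, dA, dLa] at h1
    omega
  have dLb' : Module.finrank ℂ Lb' = 1 := by
    have h1 := finrank_sup_of_isOrtho hLbLb'
    rw [← hBdec, dB, dLb] at h1
    omega
  -- orthogonality of all small pieces
  have hWLa : W ⟂ La := hWA.mono_right hLaA
  have hWLa' : W ⟂ La' := hWA.mono_right hLa'A
  have hWLb : W ⟂ Lb := hWB.mono_right hLbB
  have hWLb' : W ⟂ Lb' := hWB.mono_right hLb'B
  have hLaLb : La ⟂ Lb := hAB.mono hLaA hLbB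
  have hLaLb' : La ⟂ Lb' := hAB.mono hLaA hLb'B
  have hLa'Lb : La' ⟂ Lb := hAB.mono hLa'A hLbB
  have hLa'Lb' : La' ⟂ Lb' := hAB.mono hLa'A hLb'B
  -- the two candidate subspaces
  set Z₁ := (W ⊔ La) ⊔ Lb' with hZ₁
  set Z₂ := (W ⊔ La') ⊔ Lb with hZ₂
  haveI : FiniteDimensional ℂ Z₁ := by
    rw [hZ₁]; infer_instance
  haveI : FiniteDimensional ℂ Z₂ := by
    rw [hZ₂]; infer_instance
  -- projection decompositions
  have pX : projOn X = projOn W + projOn A := by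
    rw [hXdec]; exact projOn_sup hWA
  have pY : projOn Y = projOn W + projOn B := by
    rw [hYdec]; exact projOn_sup hWB
  have pZ : projOn Z = (projOn W + projOn La) + projOn Lb := by
    rw [hZdec, projOn_sup (Submodule.isOrtho_sup_left.2 ⟨hWLb, hLaLb⟩), projOn_sup hWLa]
  have pZ₁ : projOn Z₁ = (projOn W + projOn La) + projOn Lb' := by
    rw [hZ₁, projOn_sup (Submodule.isOrtho_sup_left.2 ⟨hWLb', hLaLb'⟩), projOn_sup hWLa]
  have pZ₂ : projOn Z₂ = (projOn W + projOn La') + projOn Lb := by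
    rw [hZ₂, projOn_sup (Submodule.isOrtho_sup_left.2 ⟨hWLb, hLa'Lb⟩), projOn_sup hWLa']
  -- compatibility facts
  have cZ₁X : Compatible Z₁ X := by
    show Commute _ _
    rw [pZ₁, pX]
    exact (((Commute.refl _).add_right (commute_projOn_of_isOrtho hWA)).add_left
      ((commute_projOn_of_isOrtho hWLa.symm).add_right (commute_projOn_of_le hLaA))).add_left
      ((commute_projOn_of_isOrtho hWLb'.symm).add_right (commute_projOn_of_isOrtho (hAB.symm.mono_left hLb'B)))
  have cZ₁Y : Compatible Z₁ Y := by
    show Commute _ _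
    rw [pZ₁, pY]
    exact (((Commute.refl _).add_right (commute_projOn_of_isOrtho hWB)).add_left
      ((commute_projOn_of_isOrtho hWLa.symm).add_right
        (commute_projOn_of_isOrtho (hAB.mono_left hLaA)))).add_left
      ((commute_projOn_of_isOrtho hWLb'.symm).add_right (commute_projOn_of_le hLb'B))
  have cZ₁Z : Compatible Z₁ Z := by
    show Commute _ _
    rw [pZ₁, pZ]
    exact ((((Commute.refl _).add_right (commute_projOn_of_isOrtho hWLa)).add_right
        (commute_projOn_of_isOrtho hWLb)).add_left
      (((commute_projOn_of_isOrtho hWLa.symm).add_right (Commute.refl _)).add_right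
        (commute_projOn_of_isOrtho hLaLb))).add_left
      (((commute_projOn_of_isOrtho hWLb'.symm).add_right
        (commute_projOn_of_isOrtho hLaLb'.symm)).add_right
        (commute_projOn_of_isOrtho hLbLb'.symm))
  have cZ₂X : Compatible Z₂ X := by
    show Commute _ _
    rw [pZ₂, pX]
    exact (((Commute.refl _).add_right (commute_projOn_of_isOrtho hWA)).add_left
      ((commute_projOn_of_isOrtho hWLa'.symm).add_right (commute_projOn_of_le hLa'A))).add_left
      ((commute_projOn_of_isOrtho hWLb.symm).add_right
        (commute_projOn_of_isOrtho (hAB.symm.mono_left hLbB)))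
  have cZ₂Y : Compatible Z₂ Y := by
    show Commute _ _
    rw [pZ₂, pY]
    exact (((Commute.refl _).add_right (commute_projOn_of_isOrtho hWB)).add_left
      ((commute_projOn_of_isOrtho hWLa'.symm).add_right
        (commute_projOn_of_isOrtho (hAB.mono_left hLa'A)))).add_left
      ((commute_projOn_of_isOrtho hWLb.symm).add_right (commute_projOn_of_le hLbB))
  have cZ₂Z : Compatible Z₂ Z := by
    show Commute _ _
    rw [pZ₂, pZ]
    exact ((((Commute.refl _).add_right (commute_projOn_of_isOrtho hWLa)).add_right
        (commute_projOn_of_isOrtho hWLb)).add_left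
      (((commute_projOn_of_isOrtho hWLa'.symm).add_right
        (commute_projOn_of_isOrtho hLaLa'.symm)).add_right
        (commute_projOn_of_isOrtho hLa'Lb))).add_left
      (((commute_projOn_of_isOrtho hWLb.symm).add_right
        (commute_projOn_of_isOrtho hLaLb.symm)).add_right (Commute.refl _))
  -- nonzero witnesses
  obtain ⟨a, haLa, ha0⟩ := Submodule.exists_mem_ne_zero_of_ne_bot (ne_bot_of_finrank_one dLa)
  obtain ⟨b, hbLb, hb0⟩ := Submodule.exists_mem_ne_zero_of_ne_bot (ne_bot_of_finrank_one dLb)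
  obtain ⟨a', ha'La', ha'0⟩ := Submodule.exists_mem_ne_zero_of_ne_bot (ne_bot_of_finrank_one dLa')
  obtain ⟨b', hb'Lb', hb'0⟩ := Submodule.exists_mem_ne_zero_of_ne_bot (ne_bot_of_finrank_one dLb')
  -- intersections of Z₁, Z₂ with X, Y, Z
  have hWX : W ≤ X := inf_le_left
  have hWY : W ≤ Y := inf_le_right
  have hAX : A ≤ X := inf_le_left
  have hBY : B ≤ Y := inf_le_left
  have hAYo : A ≤ Yᗮ := inf_le_right
  have hBXo : B ≤ Xᗮ := inf_le_right
  have iZ₁X : Z₁ ⊓ X = W ⊔ La := by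
    rw [hZ₁]
    exact sup_inf_eq_left (sup_le hWX (hLaA.trans hAX))
      ((Submodule.orthogonal_disjoint X).symm.mono_left (hLb'B.trans hBXo))
  have iZ₁Y : Z₁ ⊓ Y = W ⊔ Lb' := by
    have e : Z₁ = (W ⊔ Lb') ⊔ La := by rw [hZ₁, sup_assoc, sup_comm La Lb', ← sup_assoc]
    rw [e]
    exact sup_inf_eq_left (sup_le hWY (hLb'B.trans hBY))
      ((Submodule.orthogonal_disjoint Y).symm.mono_left (hLaA.trans hAYo))
  have iZ₁Z : Z₁ ⊓ Z = W ⊔ La := by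
    rw [hZ₁]
    refine sup_inf_eq_left (by rw [hZdec]; exact le_sup_left) ?_
    refine Submodule.IsOrtho.disjoint ?_
    rw [hZdec]
    exact Submodule.isOrtho_sup_right.2
      ⟨Submodule.isOrtho_sup_right.2 ⟨hWLb'.symm, hLaLb'.symm⟩, hLbLb'.symm⟩
  have iZ₂X : Z₂ ⊓ X = W ⊔ La' := by
    rw [hZ₂]
    exact sup_inf_eq_left (sup_le hWX (hLa'A.trans hAX))
      ((Submodule.orthogonal_disjoint X).symm.mono_left (hLbB.trans hBXo))
  have iZ₂Y : Z₂ ⊓ Y = W ⊔ Lb := by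
    have e : Z₂ = (W ⊔ Lb) ⊔ La' := by rw [hZ₂, sup_assoc, sup_comm La' Lb, ← sup_assoc]
    rw [e]
    exact sup_inf_eq_left (sup_le hWY (hLbB.trans hBY))
      ((Submodule.orthogonal_disjoint Y).symm.mono_left (hLa'A.trans hAYo))
  have iZ₂Z : Z₂ ⊓ Z = W ⊔ Lb := by
    have e : Z₂ = (W ⊔ Lb) ⊔ La' := by rw [hZ₂, sup_assoc, sup_comm La' Lb, ← sup_assoc]
    have eZ : Z = (W ⊔ Lb) ⊔ La := by rw [hZdec, sup_assoc, sup_comm La Lb, ← sup_assoc]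
    rw [e]
    refine sup_inf_eq_left (by rw [eZ]; exact le_sup_left) ?_
    refine Submodule.IsOrtho.disjoint ?_
    rw [eZ]
    exact Submodule.isOrtho_sup_right.2
      ⟨Submodule.isOrtho_sup_right.2 ⟨hWLa'.symm, hLa'Lb⟩, hLaLa'.symm⟩
  -- dimensions of the candidates
  have dWLa : Module.finrank ℂ ↥(W ⊔ La) = k - 1 := by
    rw [finrank_sup_of_isOrtho hWLa, hint, dLa]; omega
  have dWLa' : Module.finrank ℂ ↥(W ⊔ La') = k - 1 := by
    rw [finrank_sup_of_isOrtho hWLa', hint, dLa']; omega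
  have dWLb : Module.finrank ℂ ↥(W ⊔ Lb) = k - 1 := by
    rw [finrank_sup_of_isOrtho hWLb, hint, dLb]; omega
  have dWLb' : Module.finrank ℂ ↥(W ⊔ Lb') = k - 1 := by
    rw [finrank_sup_of_isOrtho hWLb', hint, dLb']; omega
  have isDimZ₁ : IsDim k Z₁ := by
    refine ⟨inferInstance, ?_⟩
    rw [hZ₁, finrank_sup_of_isOrtho (Submodule.isOrtho_sup_left.2 ⟨hWLb', hLaLb'⟩),
      finrank_sup_of_isOrtho hWLa, hint, dLa, dLb']
    omega
  have isDimZ₂ : IsDim k Z₂ := by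
    refine ⟨inferInstance, ?_⟩
    rw [hZ₂, finrank_sup_of_isOrtho (Submodule.isOrtho_sup_left.2 ⟨hWLb, hLa'Lb⟩),
      finrank_sup_of_isOrtho hWLa', hint, dLa', dLb]
    omega
  -- membership of small pieces in the candidates
  have hLaZ₁ : La ≤ Z₁ := by rw [hZ₁]; exact le_sup_left.trans' le_sup_right
  have hLb'Z₁ : Lb' ≤ Z₁ := by rw [hZ₁]; exact le_sup_right
  have hLa'Z₂ : La' ≤ Z₂ := by rw [hZ₂]; exact le_sup_left.trans' le_sup_right
  have hLbZ₂ : Lb ≤ Z₂ := by rw [hZ₂]; exact le_sup_right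
  -- the candidates are ortho-adjacent to X, Y, Z
  have oaZ₁X : OrthoAdjacent k Z₁ X := by
    refine ⟨⟨?_, by rw [iZ₁X, dWLa]⟩, cZ₁X⟩
    exact ne_of_ortho_witness (hLb'Z₁ hb'Lb') hb'0 (hBXo (hLb'B hb'Lb'))
  have oaZ₁Y : OrthoAdjacent k Z₁ Y := by
    refine ⟨⟨?_, by rw [iZ₁Y, dWLb']⟩, cZ₁Y⟩
    exact ne_of_ortho_witness (hLaZ₁ haLa) ha0 (hAYo (hLaA haLa))
  have oaZ₁Z : OrthoAdjacent k Z₁ Z := by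
    refine ⟨⟨?_, by rw [iZ₁Z, dWLa]⟩, cZ₁Z⟩
    refine (ne_of_ortho_witness (hLbZ hbLb) hb0 ?_).symm
    rw [hZ₁]
    refine Submodule.isOrtho_iff_le.1 ?_ hbLb
    exact (Submodule.isOrtho_sup_right.2
      ⟨Submodule.isOrtho_sup_right.2 ⟨hWLb.symm, hLaLb.symm⟩, hLbLb'⟩).symm.symm
  have oaZ₂X : OrthoAdjacent k Z₂ X := by
    refine ⟨⟨?_, by rw [iZ₂X, dWLa']⟩, cZ₂X⟩
    exact ne_of_ortho_witness (hLbZ₂ hbLb) hb0 (hBXo (hLbB hbLb))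
  have oaZ₂Y : OrthoAdjacent k Z₂ Y := by
    refine ⟨⟨?_, by rw [iZ₂Y, dWLb]⟩, cZ₂Y⟩
    exact ne_of_ortho_witness (hLa'Z₂ ha'La') ha'0 (hAYo (hLa'A ha'La'))
  have oaZ₂Z : OrthoAdjacent k Z₂ Z := by
    refine ⟨⟨?_, by rw [iZ₂Z, dWLb]⟩, cZ₂Z⟩
    refine (ne_of_ortho_witness (hLaZ haLa) ha0 ?_).symm
    rw [hZ₂]
    refine Submodule.isOrtho_iff_le.1 ?_ haLa
    exact Submodule.isOrtho_sup_right.2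
      ⟨Submodule.isOrtho_sup_right.2 ⟨hWLa.symm, hLaLa'⟩, hLaLb⟩
  have hne : Z₁ ≠ Z₂ := by
    refine ne_of_ortho_witness (hLaZ₁ haLa) ha0 ?_
    rw [hZ₂]
    refine Submodule.isOrtho_iff_le.1 ?_ haLa
    exact Submodule.isOrtho_sup_right.2
      ⟨Submodule.isOrtho_sup_right.2 ⟨hWLa.symm, hLaLa'⟩, hLaLb⟩
  have hset : {Z' : Submodule ℂ H | IsDim k Z' ∧ OrthoAdjacent k Z' X ∧ OrthoAdjacent k Z' Y ∧
      OrthoAdjacent k Z' Z} = {Z₁, Z₂} := by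
    ext V
    simp only [Set.mem_setOf_eq, Set.mem_insert_iff, Set.mem_singleton_iff]
    constructor
    · rintro ⟨hV, hVX, hVY, hVZ⟩
      haveI := hV.1
      obtain ⟨hWV, dMa, dMb, hVXdec, hVYdec, hVsup⟩ :=
        structure_lemma k hk X Y hX hY hint V hV hVX hVY
      set Ma := Wᗮ ⊓ (V ⊓ X) with hMa
      set Mb := Wᗮ ⊓ (V ⊓ Y) with hMb
      haveI : FiniteDimensional ℂ Ma :=
        Submodule.finiteDimensional_of_le (le_trans inf_le_right inf_le_right)
      haveI : FiniteDimensional ℂ Mb :=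
        Submodule.finiteDimensional_of_le (le_trans inf_le_right inf_le_right)
      have hMaA : Ma ≤ A := by rw [← hWcX]; exact inf_le_inf_left _ inf_le_right
      have hMbB : Mb ≤ B := by rw [← hWcY]; exact inf_le_inf_left _ inf_le_right
      have hMaV : Ma ≤ V := le_trans inf_le_right inf_le_left
      have hMbV : Mb ≤ V := le_trans inf_le_right inf_le_left
      have hVdec : V = (W ⊔ Ma) ⊔ Mb := by
        rw [hVsup, hVXdec, hVYdec, sup_sup_sup_comm, sup_idem, sup_assoc]
      haveI : FiniteDimensional ℂ (La ⊓ Ma : Submodule ℂ H) :=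
        Submodule.finiteDimensional_of_le inf_le_left
      haveI : FiniteDimensional ℂ (Lb ⊓ Mb : Submodule ℂ H) :=
        Submodule.finiteDimensional_of_le inf_le_left
      -- compute V ⊓ Z
      have hVZinf : V ⊓ Z = W ⊔ ((La ⊓ Ma) ⊔ (Lb ⊓ Mb)) := by
        apply le_antisymm
        · rintro x ⟨hx1, hx2⟩
          obtain ⟨wa, hwa, mb, hmb, rfl⟩ := Submodule.mem_sup.1 (hVdec ▸ hx1)
          obtain ⟨w, hw, ma, hma, rfl⟩ := Submodule.mem_sup.1 hwa
          obtain ⟨wb, hwb, lb, hlb, heq⟩ := Submodule.mem_sup.1 (hZdec ▸ hx2)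
          obtain ⟨w', hw', la, hla, rfl⟩ := Submodule.mem_sup.1 hwb
          have h0 : (w - w') + (ma - la) + (mb - lb) = 0 := by
            rw [show (w - w') + (ma - la) + (mb - lb) = (w + ma + mb) - ((w' + la) + lb) by
              abel, heq, sub_self]
          obtain ⟨e1, e2, e3⟩ := triple_indep hWA hWB hAB (W.sub_mem hw hw')
            (A.sub_mem (hMaA hma) (hLaA hla)) (B.sub_mem (hMbB hmb) (hLbB hlb)) h0
          rw [sub_eq_zero] at e1 e2 e3
          rw [add_assoc]
          refine Submodule.add_mem_sup hw (Submodule.add_mem_sup ?_ ?_)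
          · exact ⟨e2 ▸ hla, hma⟩
          · exact ⟨e3 ▸ hlb, hmb⟩
        · refine sup_le (le_inf hWV hWZ) (sup_le (le_inf ?_ ?_) (le_inf ?_ ?_))
          · exact inf_le_right.trans hMaV
          · exact inf_le_left.trans hLaZ
          · exact inf_le_right.trans hMbV
          · exact inf_le_left.trans hLbZ
      have oW : W ⟂ ((La ⊓ Ma) ⊔ (Lb ⊓ Mb)) :=
        Submodule.isOrtho_sup_right.2
          ⟨hWLa.mono_right inf_le_left, hWLb.mono_right inf_le_left⟩
      have oab : (La ⊓ Ma) ⟂ (Lb ⊓ Mb) :=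
        hAB.mono (inf_le_left.trans hLaA) (inf_le_left.trans hLbB)
      have hVZd := hVZ.1.2
      rw [hVZinf, finrank_sup_of_isOrtho oW, finrank_sup_of_isOrtho oab, hint] at hVZd
      have d1le : Module.finrank ℂ ↥(La ⊓ Ma) ≤ 1 := by
        rw [← dLa]; exact Submodule.finrank_mono inf_le_left
      have d2le : Module.finrank ℂ ↥(Lb ⊓ Mb) ≤ 1 := by
        rw [← dLb]; exact Submodule.finrank_mono inf_le_left
      have hcases : (Module.finrank ℂ ↥(La ⊓ Ma) = 1 ∧ Module.finrank ℂ ↥(Lb ⊓ Mb) = 0) ∨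
          (Module.finrank ℂ ↥(La ⊓ Ma) = 0 ∧ Module.finrank ℂ ↥(Lb ⊓ Mb) = 1) := by omega
      -- the key compatibility consequence
      have key : ∀ x ∈ V, x ∈ (V ⊓ Z)ᗮ → x ∈ Zᗮ := by
        intro x hxV hxo
        obtain ⟨p, hp, q, hq, hpq⟩ := Submodule.mem_sup.1 (compat_le hVZ.2 hxV)
        have hp0 : p = 0 := by
          have i1 : ⟪p, x⟫_ℂ = 0 := inner_zero_of_mem_of_mem_orthogonal hp hxo
          have i2 : ⟪p, q⟫_ℂ = 0 :=
            inner_zero_of_mem_of_mem_orthogonal (hp.2 : p ∈ Z) hq.2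
          have : ⟪p, p⟫_ℂ = 0 := by
            have hx : x - q = p := by rw [← hpq]; abel
            rw [show (⟪p, p⟫_ℂ : ℂ) = ⟪p, x - q⟫_ℂ by rw [hx], inner_sub_right, i1, i2, sub_zero]
          simpa [inner_self_eq_zero] using this
        rw [hp0, zero_add] at hpq
        rw [← hpq]
        exact hq.2
      rcases hcases with ⟨d1, d2⟩ | ⟨d1, d2⟩
      · -- V = Z₁
        left
        have eLa : La ⊓ Ma = La :=
          Submodule.eq_of_le_of_finrank_le inf_le_left (by rw [dLa, d1])
        have eMa : La ⊓ Ma = Ma :=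
          Submodule.eq_of_le_of_finrank_le inf_le_right (by rw [dMa, d1])
        have ebot : Lb ⊓ Mb = ⊥ := Submodule.finrank_eq_zero.1 d2
        have hVZinf' : V ⊓ Z = W ⊔ La := by rw [hVZinf, eLa, ebot, sup_bot_eq]
        have hMbLb' : Mb ≤ Lb' := by
          intro x hx
          have hxB : x ∈ B := hMbB hx
          have hxZo : x ∈ Zᗮ := by
            refine key x (hMbV hx) ?_
            rw [hVZinf']
            refine Submodule.isOrtho_iff_le.1 ?_ hxB
            exact (Submodule.isOrtho_sup_right.2 ⟨hBW.symm.symm, hAB.symm.mono_right hLaA⟩)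
          exact ⟨Submodule.orthogonal_le hLbZ hxZo, hxB⟩
        have eMb : Mb = Lb' :=
          Submodule.eq_of_le_of_finrank_le hMbLb' (by rw [dMb, dLb'])
        rw [hVdec, ← eMa, eLa, eMb, ← hZ₁]
      · -- V = Z₂
        right
        have eLb : Lb ⊓ Mb = Lb :=
          Submodule.eq_of_le_of_finrank_le inf_le_left (by rw [dLb, d2])
        have eMb : Lb ⊓ Mb = Mb :=
          Submodule.eq_of_le_of_finrank_le inf_le_right (by rw [dMb, d2])
        have ebot : La ⊓ Ma = ⊥ := Submodule.finrank_eq_zero.1 d1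
        have hVZinf' : V ⊓ Z = W ⊔ Lb := by rw [hVZinf, eLb, ebot, bot_sup_eq]
        have hMaLa' : Ma ≤ La' := by
          intro x hx
          have hxA : x ∈ A := hMaA hx
          have hxZo : x ∈ Zᗮ := by
            refine key x (hMaV hx) ?_
            rw [hVZinf']
            refine Submodule.isOrtho_iff_le.1 ?_ hxA
            exact (Submodule.isOrtho_sup_right.2 ⟨hAW, hAB.mono_right hLbB⟩)
          exact ⟨Submodule.orthogonal_le hLaZ hxZo, hxA⟩
        have eMa : Ma = La' :=
          Submodule.eq_of_le_of_finrank_le hMaLa' (by rw [dMa, dLa'])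
        rw [hVdec, ← eMb, eLb, eMa, ← hZ₂]
    · rintro (rfl | rfl)
      · exact ⟨isDimZ₁, oaZ₁X, oaZ₁Y, oaZ₁Z⟩
      · exact ⟨isDimZ₂, oaZ₂X, oaZ₂Y, oaZ₂Z⟩
  rw [hset]
  exact Set.ncard_pair hne

end
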